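/- Let U be a real inner product space with norm ‖·‖_U, U_h ⊆ U a subspace, Q a real inner product space with norm ‖·‖_Q, and D : U → Q a linear map with ‖Dv‖_Q ≤ C_b‖v‖_U for all v ∈ U, where C_b > 0. Let a : U × U → ℝ be a bilinear form with |a(u,v)| ≤ C_a‖u‖_U‖v‖_U for all u,v ∈ U and a(v,v) ≥ γ_a‖v‖_U² for all v ∈ U_h, where C_a, γ_a > 0. Let u ∈ U, r ∈ Q, and suppose Πu ∈ U_h satisfies the modified elliptic projection equation a(Πu, v) = a(u, v) + ⟨Dv, r⟩_Q for all v ∈ U_h. Then for every Iu ∈ U_h: ‖u − Πu‖_U ≤ (1 + C_a/γ_a)·‖u − Iu‖_U + (C_b/γ_a)·‖r‖_Q. -/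

import Mathlib

open scoped RealInnerProductSpace

/-- Quasi-optimality of the modified elliptic projection: if `Πu ∈ U_h` satisfies
`a(Πu, v) = a(u, v) + ⟨Dv, r⟩_Q` for all `v ∈ U_h`, then for every `Iu ∈ U_h`,
`‖u − Πu‖_U ≤ (1 + C_a/γ_a)‖u − Iu‖_U + (C_b/γ_a)‖r‖_Q`. -/
theorem modified_elliptic_projection_estimate {U Q : Type*}
    [NormedAddCommGroup U] [InnerProductSpace ℝ U]
    [NormedAddCommGroup Q] [InnerProductSpace ℝ Q]
    (Uh : Submodule ℝ U) (D : U →ₗ[ℝ] Q)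
    (Cb Ca γa : ℝ) (hCb : 0 < Cb) (hCa : 0 < Ca) (hγa : 0 < γa)
    (hD : ∀ v : U, ‖D v‖ ≤ Cb * ‖v‖)
    (a : U →ₗ[ℝ] U →ₗ[ℝ] ℝ)
    (hbound : ∀ u v : U, |a u v| ≤ Ca * ‖u‖ * ‖v‖)
    (hcoer : ∀ v ∈ Uh, γa * ‖v‖ ^ 2 ≤ a v v)
    (u : U) (r : Q) (Pu : U) (hPu : Pu ∈ Uh)
    (hproj : ∀ v ∈ Uh, a Pu v = a u v + ⟪D v, r⟫)
    (Iu : U) (hIu : Iu ∈ Uh) :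
    ‖u - Pu‖ ≤ (1 + Ca / γa) * ‖u - Iu‖ + (Cb / γa) * ‖r‖ := by
  set e := Pu - Iu with he
  have heUh : e ∈ Uh := Uh.sub_mem hPu hIu
  have hae : a e e = a (u - Iu) e + ⟪D e, r⟫ := by
    have h1 : a Pu e = a u e + ⟪D e, r⟫ := hproj e heUh
    simp only [map_sub, LinearMap.sub_apply, he] at h1 ⊢
    linarith
  have hkey : γa * ‖e‖ ^ 2 ≤ (Ca * ‖u - Iu‖ + Cb * ‖r‖) * ‖e‖ := by
    calc γa * ‖e‖ ^ 2 ≤ a e e := hcoer e heUh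
      _ = a (u - Iu) e + ⟪D e, r⟫ := hae
      _ ≤ Ca * ‖u - Iu‖ * ‖e‖ + ‖D e‖ * ‖r‖ := by
          gcongr
          · exact le_of_abs_le (hbound _ _)
          · exact real_inner_le_norm _ _
      _ ≤ Ca * ‖u - Iu‖ * ‖e‖ + (Cb * ‖e‖) * ‖r‖ := by
          gcongr; exact hD e
      _ = (Ca * ‖u - Iu‖ + Cb * ‖r‖) * ‖e‖ := by ring
  have hebd : ‖e‖ ≤ (Ca / γa) * ‖u - Iu‖ + (Cb / γa) * ‖r‖ := by
    rcases eq_or_lt_of_le (norm_nonneg e) with h0 | h0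
    · rw [← h0]
      positivity
    · have := (mul_le_mul_iff_left₀ h0).mp (by nlinarith : γa * ‖e‖ * ‖e‖ ≤ ((Ca * ‖u - Iu‖ + Cb * ‖r‖)) * ‖e‖)
      rw [div_mul_eq_mul_div, div_mul_eq_mul_div, ← add_div, le_div_iff₀ hγa]
      nlinarith
  calc ‖u - Pu‖ ≤ ‖u - Iu‖ + ‖e‖ := by
        have : u - Pu = (u - Iu) + -e := by rw [he]; abel
        rw [this]
        simpa using norm_add_le (u - Iu) (-e)
    _ ≤ ‖u - Iu‖ + ((Ca / γa) * ‖u - Iu‖ + (Cb / γa) * ‖r‖) := by linarith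
    _ = (1 + Ca / γa) * ‖u - Iu‖ + (Cb / γa) * ‖r‖ := by ring
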